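/- The dihedral group D_{2^n} of order 2^n (n ≥ 3) has exactly 2^n − 1 nonpower subgroups. -/

import Mathlib

/-- The power subgroup `G^m`: the subgroup generated by all `m`-th powers. -/
def powSub (G : Type*) [Group G] (m : ℕ) : Subgroup G :=
  Subgroup.closure {x : G | ∃ g : G, g ^ m = x}

/-- A subgroup is a nonpower subgroup if it is not `G^m` for any `m ≥ 1`. -/
def IsNonpower {G : Type*} [Group G] (H : Subgroup G) : Prop :=
  ¬ ∃ m : ℕ, 0 < m ∧ H = powSub G m

/-- The number of nonpower subgroups of `G`. -/
noncomputable def nps (G : Type*) [Group G] : ℕ :=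
  Nat.card {H : Subgroup G // IsNonpower H}

/-- The number of power subgroups of `G`. -/
noncomputable def ps (G : Type*) [Group G] : ℕ :=
  Nat.card {H : Subgroup G // ∃ m : ℕ, 0 < m ∧ H = powSub G m}

/-- The total number of subgroups of `G`. -/
noncomputable def numSubgroups (G : Type*) [Group G] : ℕ :=
  Nat.card (Subgroup G)


open DihedralGroup

namespace NPSAux

theorem r_inv {m : ℕ} (i : ZMod m) : (r i)⁻¹ = r (-i) := rfl

theorem r_pow {m : ℕ} (i : ZMod m) (M : ℕ) : (r i) ^ M = r ((M : ZMod m) * i) := by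
  induction M with
  | zero => simp
  | succ M ih => rw [pow_succ, ih, r_mul_r]; push_cast; ring_nf

theorem sr_pow_even {m : ℕ} (i : ZMod m) {M : ℕ} (h : 2 ∣ M) : (sr i) ^ M = 1 := by
  obtain ⟨q, rfl⟩ := h
  rw [pow_mul, sq, sr_mul_self, one_pow]

theorem sr_pow_odd {m : ℕ} (i : ZMod m) {M : ℕ} (h : ¬ 2 ∣ M) : (sr i) ^ M = sr i := by
  obtain ⟨q, rfl⟩ : ∃ q, M = 2 * q + 1 := (Nat.odd_iff.mpr (Nat.two_dvd_ne_zero.mp h))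
  rw [pow_succ, pow_mul, sq, sr_mul_self, one_pow, one_mul]

/-- Cyclic subgroup of rotations that are multiples of `d`. -/
def Csub (m d : ℕ) : Subgroup (DihedralGroup m) where
  carrier := {x | ∃ t : ℤ, x = r ((t * d : ℤ) : ZMod m)}
  one_mem' := ⟨0, by push_cast; simp⟩
  mul_mem' := by
    rintro _ _ ⟨t, rfl⟩ ⟨s, rfl⟩
    exact ⟨t + s, by rw [r_mul_r]; push_cast; ring_nf⟩
  inv_mem' := by
    rintro _ ⟨t, rfl⟩
    exact ⟨-t, by rw [r_inv]; push_cast; ring_nf⟩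

/-- Subgroup generated by rotations multiples of `d` together with the reflection `sr i`. -/
def Dsub (m d : ℕ) (i : ZMod m) : Subgroup (DihedralGroup m) where
  carrier := {x | (∃ t : ℤ, x = r ((t * d : ℤ) : ZMod m)) ∨
      (∃ t : ℤ, x = sr (i + ((t * d : ℤ) : ZMod m)))}
  one_mem' := Or.inl ⟨0, by push_cast; simp⟩
  mul_mem' := by
    rintro _ _ (⟨t, rfl⟩ | ⟨t, rfl⟩) (⟨s, rfl⟩ | ⟨s, rfl⟩)
    · exact Or.inl ⟨t + s, by rw [r_mul_r]; push_cast; ring_nf⟩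
    · exact Or.inr ⟨s - t, by rw [r_mul_sr]; push_cast; ring_nf⟩
    · exact Or.inr ⟨t + s, by rw [sr_mul_r]; push_cast; ring_nf⟩
    · exact Or.inl ⟨s - t, by rw [sr_mul_sr]; push_cast; ring_nf⟩
  inv_mem' := by
    rintro _ (⟨t, rfl⟩ | ⟨t, rfl⟩)
    · exact Or.inl ⟨-t, by rw [r_inv]; push_cast; ring_nf⟩
    · exact Or.inr ⟨t, rfl⟩

theorem mem_Csub {m d : ℕ} {x : DihedralGroup m} :
    x ∈ Csub m d ↔ ∃ t : ℤ, x = r ((t * d : ℤ) : ZMod m) := Iff.rfl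

theorem mem_Dsub {m d : ℕ} {i : ZMod m} {x : DihedralGroup m} :
    x ∈ Dsub m d i ↔ (∃ t : ℤ, x = r ((t * d : ℤ) : ZMod m)) ∨
      (∃ t : ℤ, x = sr (i + ((t * d : ℤ) : ZMod m))) := Iff.rfl

theorem castdvd {m : ℕ} {x y : ℤ} :
    ((x : ZMod m) = (y : ZMod m)) ↔ (m : ℤ) ∣ y - x := by
  rw [ZMod.intCast_eq_intCast_iff, Int.modEq_iff_dvd]

theorem cast_val {m : ℕ} [NeZero m] (j : ZMod m) : ((j.val : ℤ) : ZMod m) = j := by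
  push_cast
  exact ZMod.natCast_zmod_val j

/-- Every subgroup of the dihedral group of order `2 ^ (e+1)` is a `Csub` or a `Dsub`. -/
theorem classification {e : ℕ} (H : Subgroup (DihedralGroup (2 ^ e))) :
    ∃ k ≤ e, H = Csub (2 ^ e) (2 ^ k) ∨
      ∃ i : ZMod (2 ^ e), i.val < 2 ^ k ∧ H = Dsub (2 ^ e) (2 ^ k) i := by
  haveI : NeZero (2 ^ e) := ⟨pow_ne_zero _ two_ne_zero⟩
  set R : AddSubgroup ℤ :=
    { carrier := {z : ℤ | r ((z : ZMod (2 ^ e))) ∈ H}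
      zero_mem' := by simpa [← one_def] using H.one_mem
      add_mem' := by
        intro x y hx hy
        have : r ((x : ZMod (2 ^ e))) * r ((y : ZMod (2 ^ e))) ∈ H := H.mul_mem hx hy
        simpa [r_mul_r] using this
      neg_mem' := by
        intro x hx
        have h2 : (r ((x : ZMod (2 ^ e))))⁻¹ ∈ H := H.inv_mem hx
        rw [r_inv] at h2
        simpa using h2 } with hR
  obtain ⟨a, ha⟩ := Int.subgroup_cyclic R
  have hmemR : ∀ z : ℤ, z ∈ R ↔ a ∣ z := by
    intro z
    rw [ha, AddSubgroup.mem_closure_singleton]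
    constructor
    · rintro ⟨t, rfl⟩; exact Dvd.intro_left t (by simp [zsmul_eq_mul])
    · rintro ⟨t, rfl⟩; exact ⟨t, by simp [zsmul_eq_mul, mul_comm]⟩
  have hmR : ((2 ^ e : ℕ) : ℤ) ∈ R := by
    show r ((((2 ^ e : ℕ) : ℤ) : ZMod (2 ^ e))) ∈ H
    have h0 : ((((2 ^ e : ℕ) : ℤ)) : ZMod (2 ^ e)) = 0 := by
      exact_mod_cast ZMod.natCast_self (2 ^ e)
    rw [h0, ← one_def]; exact H.one_mem
  have hadvd : a.natAbs ∣ 2 ^ e := by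
    have h1 := Int.natAbs_dvd_natAbs.mpr ((hmemR _).mp hmR)
    rwa [Int.natAbs_natCast] at h1
  obtain ⟨k, hk, hka⟩ := (Nat.dvd_prime_pow Nat.prime_two).mp hadvd
  have hrmem : ∀ z : ℤ, r ((z : ZMod (2 ^ e))) ∈ H ↔ ((2 ^ k : ℕ) : ℤ) ∣ z := by
    intro z
    have h1 : r ((z : ZMod (2 ^ e))) ∈ H ↔ z ∈ R := Iff.rfl
    rw [h1, hmemR, ← Int.natAbs_dvd, hka]
  refine ⟨k, hk, ?_⟩
  by_cases hsr : ∃ j : ZMod (2 ^ e), sr j ∈ H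
  · right
    obtain ⟨i₀, hi₀⟩ := hsr
    set i : ZMod (2 ^ e) := ((i₀.val % 2 ^ k : ℕ) : ZMod (2 ^ e)) with hi
    have hklem : (2 : ℕ) ^ k ≤ 2 ^ e := Nat.pow_le_pow_right (by norm_num) hk
    have hival : i.val = i₀.val % 2 ^ k := by
      rw [hi, ZMod.val_cast_of_lt]
      exact lt_of_lt_of_le (Nat.mod_lt _ (Nat.pow_pos (by norm_num))) hklem
    have hivlt : i.val < 2 ^ k := hival ▸ Nat.mod_lt _ (Nat.pow_pos (by norm_num))
    refine ⟨i, hivlt, ?_⟩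
    have hdiffmem : r (i - i₀) ∈ H := by
      have hcast : i - i₀ =
          ((((i₀.val % 2 ^ k : ℕ) : ℤ) - ((i₀.val : ℕ) : ℤ) : ℤ) : ZMod (2 ^ e)) := by
        rw [Int.cast_sub, Int.cast_natCast, Int.cast_natCast, ZMod.natCast_zmod_val]
      rw [hcast, hrmem]
      push_cast
      exact (Int.mod_modEq _ _).symm.dvd
    have hsri : sr i ∈ H := by
      have h2 : sr i₀ * r (i - i₀) ∈ H := H.mul_mem hi₀ hdiffmem
      simpa [sr_mul_r] using h2
    ext x
    rw [mem_Dsub]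
    constructor
    · intro hx
      cases x with
      | r j =>
        left
        have hj : r (((j.val : ℤ) : ZMod (2 ^ e))) ∈ H := by rwa [cast_val]
        obtain ⟨t, ht⟩ := (hrmem _).mp hj
        exact ⟨t, by rw [← cast_val j, ht, mul_comm]⟩
      | sr j =>
        right
        have hrji : r (j - i) ∈ H := by
          have h3 : sr i * sr j ∈ H := H.mul_mem hsri hx
          simpa [sr_mul_sr] using h3
        have hji : j - i = ((((j.val : ℤ) - (i.val : ℤ) : ℤ)) : ZMod (2 ^ e)) := by
          rw [Int.cast_sub, cast_val, cast_val]
        rw [hji] at hrji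
        obtain ⟨t, ht⟩ := (hrmem _).mp hrji
        refine ⟨t, ?_⟩
        rw [mul_comm] at ht
        rw [← ht, Int.cast_sub, cast_val, cast_val]
        congr 1
        ring
    · rintro (⟨t, rfl⟩ | ⟨t, rfl⟩)
      · rw [hrmem]; exact dvd_mul_left _ _
      · have h4 : sr i * r (((t * (2 ^ k : ℕ) : ℤ) : ZMod (2 ^ e))) ∈ H :=
          H.mul_mem hsri (by rw [hrmem]; exact dvd_mul_left _ _)
        simpa [sr_mul_r] using h4
  · left
    ext x
    rw [mem_Csub]
    constructor
    · intro hx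
      cases x with
      | r j =>
        have hj : r (((j.val : ℤ) : ZMod (2 ^ e))) ∈ H := by rwa [cast_val]
        obtain ⟨t, ht⟩ := (hrmem _).mp hj
        exact ⟨t, by rw [← cast_val j, ht, mul_comm]⟩
      | sr j => exact absurd ⟨j, hx⟩ hsr
    · rintro ⟨t, rfl⟩
      rw [hrmem]; exact dvd_mul_left _ _


theorem sr_not_mem_Csub {m d : ℕ} (j : ZMod m) : sr j ∉ Csub m d := by
  rintro ⟨t, h⟩
  cases h

theorem r_one_not_rot {e k : ℕ} (he : 1 ≤ e) (hk : 1 ≤ k)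
    {t : ℤ} (h : (r 1 : DihedralGroup (2 ^ e)) = r ((t * (2 ^ k : ℕ) : ℤ) : ZMod (2 ^ e))) :
    False := by
  have h1 : (((1 : ℤ)) : ZMod (2 ^ e)) = ((t * (2 ^ k : ℕ) : ℤ) : ZMod (2 ^ e)) := by
    have := DihedralGroup.r.inj h
    rwa [show (((1:ℤ)) : ZMod (2 ^ e)) = 1 by norm_cast]
  rw [castdvd] at h1
  have d1 : (2 : ℤ) ∣ ((2 ^ e : ℕ) : ℤ) := by
    push_cast; exact dvd_pow_self 2 (by omega)
  have d2 : (2 : ℤ) ∣ t * ((2 ^ k : ℕ) : ℤ) :=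
    Dvd.dvd.mul_left (by push_cast; exact dvd_pow_self 2 (by omega)) t
  have d3 : (2 : ℤ) ∣ t * ((2 ^ k : ℕ) : ℤ) - 1 := d1.trans h1
  have d4 : (2 : ℤ) ∣ 1 := by
    have := dvd_sub d2 d3
    simpa using this
  norm_num at d4

theorem r_one_not_mem_Csub {e k : ℕ} (he : 1 ≤ e) (hk : 1 ≤ k) :
    (r 1 : DihedralGroup (2 ^ e)) ∉ Csub (2 ^ e) (2 ^ k) := by
  rintro ⟨t, h⟩
  exact r_one_not_rot he hk h

theorem r_one_not_mem_Dsub {e k : ℕ} (he : 1 ≤ e) (hk : 1 ≤ k) {i : ZMod (2 ^ e)} :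
    (r 1 : DihedralGroup (2 ^ e)) ∉ Dsub (2 ^ e) (2 ^ k) i := by
  rintro (⟨t, h⟩ | ⟨t, h⟩)
  · exact r_one_not_rot he hk h
  · cases h

theorem sr_mem_Dsub {m d : ℕ} (i : ZMod m) : sr i ∈ Dsub m d i :=
  Or.inr ⟨0, by push_cast; simp⟩

theorem powSub_odd {e M : ℕ} (hM : ¬ 2 ∣ M) :
    powSub (DihedralGroup (2 ^ e)) M = ⊤ := by
  rw [eq_top_iff]
  rintro x -
  cases x with
  | r j =>
    have hcop : Nat.Coprime M (2 ^ e) :=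
      Nat.Coprime.pow_right e ((Nat.prime_two.coprime_iff_not_dvd.mpr hM).symm)
    set u := ZMod.unitOfCoprime M hcop with hu
    refine Subgroup.subset_closure ⟨r ((↑u⁻¹ : ZMod (2 ^ e)) * j), ?_⟩
    rw [r_pow]
    congr 1
    rw [← mul_assoc]
    have h1 : ((M : ZMod (2 ^ e)) : ZMod (2 ^ e)) * (↑u⁻¹ : ZMod (2 ^ e)) = 1 := by
      rw [← ZMod.coe_unitOfCoprime M hcop, ← hu, ← Units.val_mul, mul_inv_cancel, Units.val_one]
    rw [h1, one_mul]
  | sr j => exact Subgroup.subset_closure ⟨sr j, sr_pow_odd j hM⟩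

theorem powSub_even {e t q : ℕ} (ht : 1 ≤ t) (hq : ¬ 2 ∣ q) :
    powSub (DihedralGroup (2 ^ e)) (2 ^ t * q) = Csub (2 ^ e) (2 ^ (min t e)) := by
  haveI : NeZero (2 ^ e) := ⟨pow_ne_zero _ two_ne_zero⟩
  have hcop : Nat.Coprime q (2 ^ e) :=
    Nat.Coprime.pow_right e ((Nat.prime_two.coprime_iff_not_dvd.mpr hq).symm)
  apply le_antisymm
  · rw [powSub, Subgroup.closure_le]
    rintro x ⟨g, rfl⟩
    cases g with
    | r j =>
      rw [SetLike.mem_coe, r_pow]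
      refine ⟨(2 ^ (t - min t e) * q * j.val : ℕ), ?_⟩
      congr 1
      have h2 : (2 : ℕ) ^ t = 2 ^ (t - min t e) * 2 ^ (min t e) := by
        rw [← pow_add, Nat.sub_add_cancel (min_le_left t e)]
      have hnat : (2 ^ t * q * j.val : ℕ) = (2 ^ (t - min t e) * q * j.val) * 2 ^ (min t e) := by
        rw [h2]; ring
      have hL : ((2 ^ t * q : ℕ) : ZMod (2 ^ e)) * j
          = (((2 ^ t * q * j.val : ℕ) : ℤ) : ZMod (2 ^ e)) := by
        push_cast [ZMod.natCast_zmod_val]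
        ring
      rw [hL, hnat]
      push_cast
      ring
    | sr j =>
      rw [SetLike.mem_coe, sr_pow_even _ ((dvd_pow_self 2 (Nat.one_le_iff_ne_zero.mp ht)).mul_right q)]
      exact (Csub _ _).one_mem
  · rintro x ⟨s, rfl⟩
    by_cases hte : t ≤ e
    · have hmin : min t e = t := min_eq_left hte
      set u := ZMod.unitOfCoprime q hcop with hu
      refine Subgroup.subset_closure ⟨r (((s : ℤ) : ZMod (2 ^ e)) * (↑u⁻¹ : ZMod (2 ^ e))), ?_⟩
      rw [r_pow]
      congr 1
      have h1 : ((q : ZMod (2 ^ e))) * (↑u⁻¹ : ZMod (2 ^ e)) = 1 := by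
        rw [← ZMod.coe_unitOfCoprime q hcop, ← hu, ← Units.val_mul, mul_inv_cancel, Units.val_one]
      have : ((2 ^ t * q : ℕ) : ZMod (2 ^ e)) * (((s : ℤ) : ZMod (2 ^ e)) * (↑u⁻¹ : ZMod (2 ^ e)))
          = (((2:ℕ) ^ t : ZMod (2 ^ e)) * ((s : ℤ) : ZMod (2 ^ e))) * ((q : ZMod (2 ^ e)) * (↑u⁻¹ : ZMod (2 ^ e))) := by
        push_cast
        ring
      rw [this, h1, mul_one, hmin]
      push_cast
      ring
    · have hmin : min t e = e := min_eq_right (le_of_not_ge hte)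
      have h0 : ((s * ((2 ^ (min t e) : ℕ) : ℤ) : ℤ) : ZMod (2 ^ e)) = 0 := by
        rw [hmin, Int.cast_mul,
          show (((2 ^ e : ℕ) : ℤ) : ZMod (2 ^ e)) = 0 from by exact_mod_cast ZMod.natCast_self (2 ^ e),
          mul_zero]
      rw [h0, ← one_def]
      exact (powSub _ _).one_mem


theorem exists_odd_decomp {M : ℕ} (hM : 0 < M) (h2 : 2 ∣ M) :
    ∃ t q : ℕ, 1 ≤ t ∧ ¬ 2 ∣ q ∧ M = 2 ^ t * q := by
  refine ⟨M.factorization 2, M / 2 ^ (M.factorization 2), ?_, ?_, ?_⟩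
  · exact Nat.Prime.factorization_pos_of_dvd Nat.prime_two hM.ne' h2
  · exact Nat.not_dvd_ordCompl Nat.prime_two hM.ne'
  · exact (Nat.ordProj_mul_ordCompl_eq_self M 2).symm

theorem r_one_mem_Csub_one {e : ℕ} : (r 1 : DihedralGroup (2 ^ e)) ∈ Csub (2 ^ e) 1 :=
  ⟨1, by norm_num⟩

theorem isNonpower_Csub_one {e : ℕ} (he : 1 ≤ e) : IsNonpower (Csub (2 ^ e) 1) := by
  rintro ⟨M, hM, hEq⟩
  by_cases h2 : 2 ∣ M
  · obtain ⟨t, q, ht, hq, rfl⟩ := exists_odd_decomp hM h2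
    rw [powSub_even ht hq] at hEq
    have hr1 := r_one_mem_Csub_one (e := e)
    rw [hEq] at hr1
    exact r_one_not_mem_Csub he (le_min ht he) hr1
  · rw [powSub_odd h2] at hEq
    have h3 : sr 0 ∈ Csub (2 ^ e) 1 := by rw [hEq]; trivial
    exact sr_not_mem_Csub 0 h3

theorem Csub_is_power {e k : ℕ} (hk1 : 1 ≤ k) (hke : k ≤ e) :
    ¬ IsNonpower (Csub (2 ^ e) (2 ^ k)) := by
  intro h
  have h1 := powSub_even (e := e) (t := k) (q := 1) hk1 (by norm_num)
  rw [mul_one, min_eq_left hke] at h1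
  exact h ⟨2 ^ k, Nat.pow_pos (by norm_num), h1.symm⟩

theorem isNonpower_Dsub {e k : ℕ} (he : 1 ≤ e) (hk1 : 1 ≤ k) (i : ZMod (2 ^ e)) :
    IsNonpower (Dsub (2 ^ e) (2 ^ k) i) := by
  rintro ⟨M, hM, hEq⟩
  by_cases h2 : 2 ∣ M
  · obtain ⟨t, q, ht, hq, rfl⟩ := exists_odd_decomp hM h2
    rw [powSub_even ht hq] at hEq
    have h3 := sr_mem_Dsub (d := 2 ^ k) i
    rw [hEq] at h3
    exact sr_not_mem_Csub i h3
  · rw [powSub_odd h2] at hEq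
    have h3 : r 1 ∈ Dsub (2 ^ e) (2 ^ k) i := by rw [hEq]; trivial
    exact r_one_not_mem_Dsub he hk1 h3

theorem Dsub_one_zero {e : ℕ} : Dsub (2 ^ e) 1 (0 : ZMod (2 ^ e)) = ⊤ := by
  haveI : NeZero (2 ^ e) := ⟨pow_ne_zero _ two_ne_zero⟩
  rw [eq_top_iff]
  rintro x -
  cases x with
  | r j => exact Or.inl ⟨(j.val : ℤ), by simp [cast_val]⟩
  | sr j => exact Or.inr ⟨(j.val : ℤ), by simp [cast_val]⟩

theorem rot_mem_Dsub {m d : ℕ} (i : ZMod m) :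
    (r (((d : ℕ) : ℤ) : ZMod m) : DihedralGroup m) ∈ Dsub m d i :=
  Or.inl ⟨1, by rw [one_mul]⟩

theorem rot_le {e k k' : ℕ} (hk'e : k' ≤ e) {t : ℤ}
    (h : (r ((((2 ^ k : ℕ) : ℤ)) : ZMod (2 ^ e)) : DihedralGroup (2 ^ e))
      = r ((t * (2 ^ k' : ℕ) : ℤ) : ZMod (2 ^ e))) : k' ≤ k := by
  by_contra hlt
  push_neg at hlt
  have h1 := DihedralGroup.r.inj h
  rw [castdvd] at h1
  have d1 : ((2 : ℤ)) ^ (k + 1) ∣ ((2 ^ e : ℕ) : ℤ) := by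
    push_cast; exact pow_dvd_pow 2 (by omega)
  have d2 : ((2 : ℤ)) ^ (k + 1) ∣ t * ((2 ^ k' : ℕ) : ℤ) :=
    Dvd.dvd.mul_left (by push_cast; exact pow_dvd_pow 2 (by omega)) t
  have d3 : ((2 : ℤ)) ^ (k + 1) ∣ ((2 ^ k : ℕ) : ℤ) := by
    have h4 := dvd_sub d2 (d1.trans h1)
    have h5 : t * ((2 ^ k' : ℕ) : ℤ) - (t * ((2 ^ k' : ℕ) : ℤ) - ((2 ^ k : ℕ) : ℤ))
        = ((2 ^ k : ℕ) : ℤ) := by ring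
    rwa [h5] at h4
  have d4 : (2 ^ (k + 1) : ℕ) ∣ 2 ^ k := by
    have : (((2 ^ (k + 1) : ℕ)) : ℤ) ∣ ((2 ^ k : ℕ) : ℤ) := by push_cast at d3 ⊢; exact d3
    exact_mod_cast this
  have d5 := Nat.le_of_dvd (Nat.pow_pos (by norm_num)) d4
  have d6 : (2 : ℕ) ^ k < 2 ^ (k + 1) := Nat.pow_lt_pow_right one_lt_two (lt_add_one k)
  omega

theorem Dsub_i_eq {e k : ℕ} (hke : k ≤ e) {i i' : ZMod (2 ^ e)}
    (hi : i.val < 2 ^ k) (hi' : i'.val < 2 ^ k) {t : ℤ}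
    (h : (sr i' : DihedralGroup (2 ^ e)) = sr (i + ((t * (2 ^ k : ℕ) : ℤ) : ZMod (2 ^ e)))) :
    i = i' := by
  haveI : NeZero (2 ^ e) := ⟨pow_ne_zero _ two_ne_zero⟩
  have h1 := DihedralGroup.sr.inj h
  have h2 : (((i'.val : ℤ)) : ZMod (2 ^ e))
      = ((((i.val : ℤ) + t * (2 ^ k : ℕ) : ℤ)) : ZMod (2 ^ e)) := by
    calc (((i'.val : ℤ)) : ZMod (2 ^ e)) = i' := cast_val _
    _ = i + ((t * (2 ^ k : ℕ) : ℤ) : ZMod (2 ^ e)) := h1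
    _ = ((((i.val : ℤ) + t * (2 ^ k : ℕ) : ℤ)) : ZMod (2 ^ e)) := by
        rw [Int.cast_add, cast_val]
  rw [castdvd] at h2
  have dk : ((2 ^ k : ℕ) : ℤ) ∣ ((i.val : ℤ) - i'.val) := by
    have de : ((2 ^ k : ℕ) : ℤ) ∣ ((2 ^ e : ℕ) : ℤ) := by
      push_cast; exact pow_dvd_pow 2 hke
    have h3 := dvd_sub (de.trans h2) (dvd_mul_left ((2 ^ k : ℕ) : ℤ) t)
    have h4 : ((i.val : ℤ) + t * (2 ^ k : ℕ) - i'.val) - t * ((2 ^ k : ℕ) : ℤ)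
        = (i.val : ℤ) - i'.val := by ring
    rwa [h4] at h3
  have h5 : (i.val : ℤ) - i'.val = 0 := by
    refine Int.eq_zero_of_abs_lt_dvd dk ?_
    rw [abs_sub_lt_iff]
    constructor <;> [skip; skip] <;>
      · have := hi; have := hi'
        generalize hK : (2 : ℕ) ^ k = K at *
        omega
  have h6 : i.val = i'.val := by omega
  rw [← ZMod.natCast_zmod_val i, ← ZMod.natCast_zmod_val i', h6]

theorem sum_pow (e : ℕ) : (∑ k : Fin e, 2 ^ ((k : ℕ) + 1)) = 2 ^ (e + 1) - 2 := by
  induction e with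
  | zero => simp
  | succ e ih =>
    rw [Fin.sum_univ_castSucc]
    simp only [Fin.coe_castSucc, Fin.val_last, ih]
    have h1 : (2 : ℕ) ^ (e + 1 + 1) = 2 ^ (e + 1) * 2 := by rw [pow_succ]
    have h2 : 2 ≤ (2 : ℕ) ^ (e + 1) := by
      calc (2:ℕ) = 2 ^ 1 := (pow_one 2).symm
      _ ≤ 2 ^ (e + 1) := Nat.pow_le_pow_right (by norm_num) (by omega)
    generalize hP : (2 : ℕ) ^ (e + 1) = P at *
    omega

/-- The enumeration of nonpower subgroups. -/
def Fmap {e : ℕ} (he : 1 ≤ e) :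
    Option ((k : Fin e) × Fin (2 ^ ((k : ℕ) + 1))) →
      {H : Subgroup (DihedralGroup (2 ^ e)) // IsNonpower H}
  | none => ⟨Csub (2 ^ e) 1, isNonpower_Csub_one he⟩
  | some ⟨k, i⟩ => ⟨Dsub (2 ^ e) (2 ^ ((k : ℕ) + 1)) (((i : ℕ) : ZMod (2 ^ e))),
      isNonpower_Dsub he (by omega) _⟩

theorem val_cast_fin {e k : ℕ} (hk : k + 1 ≤ e) (i : Fin (2 ^ (k + 1))) :
    (((i : ℕ) : ZMod (2 ^ e))).val = (i : ℕ) := by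
  haveI : NeZero (2 ^ e) := ⟨pow_ne_zero _ two_ne_zero⟩
  exact ZMod.val_cast_of_lt (lt_of_lt_of_le i.isLt (Nat.pow_le_pow_right (by norm_num) hk))

theorem Fmap_bij {e : ℕ} (he : 1 ≤ e) : Function.Bijective (Fmap he) := by
  haveI : NeZero (2 ^ e) := ⟨pow_ne_zero _ two_ne_zero⟩
  constructor
  · rintro (_ | ⟨k, i⟩) (_ | ⟨k', i'⟩) h
    · rfl
    · exfalso
      have hEq : Csub (2 ^ e) 1 = Dsub (2 ^ e) (2 ^ ((k' : ℕ) + 1)) (((i' : ℕ) : ZMod (2 ^ e))) :=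
        congrArg Subtype.val h
      have h1 := sr_mem_Dsub (d := 2 ^ ((k' : ℕ) + 1)) (((i' : ℕ) : ZMod (2 ^ e)))
      rw [← hEq] at h1
      exact sr_not_mem_Csub _ h1
    · exfalso
      have hEq : Dsub (2 ^ e) (2 ^ ((k : ℕ) + 1)) (((i : ℕ) : ZMod (2 ^ e))) = Csub (2 ^ e) 1 :=
        congrArg Subtype.val h
      have h1 := sr_mem_Dsub (d := 2 ^ ((k : ℕ) + 1)) (((i : ℕ) : ZMod (2 ^ e)))
      rw [hEq] at h1
      exact sr_not_mem_Csub _ h1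
    · have hEq : Dsub (2 ^ e) (2 ^ ((k : ℕ) + 1)) (((i : ℕ) : ZMod (2 ^ e)))
          = Dsub (2 ^ e) (2 ^ ((k' : ℕ) + 1)) (((i' : ℕ) : ZMod (2 ^ e))) :=
        congrArg Subtype.val h
      -- first, the exponents agree
      have hkk' : (k : ℕ) = (k' : ℕ) := by
        have hm1 := rot_mem_Dsub (m := 2 ^ e) (d := 2 ^ ((k : ℕ) + 1)) (((i : ℕ) : ZMod (2 ^ e)))
        rw [hEq] at hm1
        have hle1 : (k' : ℕ) + 1 ≤ (k : ℕ) + 1 := by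
          rcases hm1 with ⟨t, h1⟩ | ⟨t, h1⟩
          · exact rot_le (by have := k'.isLt; omega) h1
          · exact absurd h1 (by simp)
        have hm2 := rot_mem_Dsub (m := 2 ^ e) (d := 2 ^ ((k' : ℕ) + 1)) (((i' : ℕ) : ZMod (2 ^ e)))
        rw [← hEq] at hm2
        have hle2 : (k : ℕ) + 1 ≤ (k' : ℕ) + 1 := by
          rcases hm2 with ⟨t, h1⟩ | ⟨t, h1⟩
          · exact rot_le (by have := k.isLt; omega) h1
          · exact absurd h1 (by simp)
        omega
      obtain rfl : k = k' := Fin.ext hkk'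
      have hii' : (((i : ℕ) : ZMod (2 ^ e))) = (((i' : ℕ) : ZMod (2 ^ e))) := by
        have hm1 := sr_mem_Dsub (d := 2 ^ ((k : ℕ) + 1)) (((i' : ℕ) : ZMod (2 ^ e)))
        rw [← hEq] at hm1
        rcases hm1 with ⟨t, h1⟩ | ⟨t, h1⟩
        · exact absurd h1 (by simp)
        · exact Dsub_i_eq (by have := k.isLt; omega)
            (by rw [val_cast_fin (by have := k.isLt; omega)]; exact i.isLt)
            (by rw [val_cast_fin (by have := k.isLt; omega)]; exact i'.isLt) h1
      have : (i : ℕ) = (i' : ℕ) := by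
        have := congrArg ZMod.val hii'
        rwa [val_cast_fin (by have := k.isLt; omega), val_cast_fin (by have := k.isLt; omega)]
          at this
      obtain rfl : i = i' := Fin.ext this
      rfl
  · rintro ⟨H, hH⟩
    obtain ⟨k, hk, hC | ⟨i, hival, hD⟩⟩ := classification H
    · rcases Nat.eq_zero_or_pos k with rfl | hk1
      · refine ⟨none, ?_⟩
        apply Subtype.ext
        show Csub (2 ^ e) 1 = H
        rw [hC, pow_zero]
      · exact absurd hH (hC ▸ Csub_is_power hk1 hk)
    · rcases Nat.eq_zero_or_pos k with rfl | hk1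
      · exfalso
        have hi0 : i = 0 := by
          have : i.val = 0 := by omega
          rwa [ZMod.val_eq_zero] at this
        apply hH
        refine ⟨1, one_pos, ?_⟩
        rw [powSub_odd (by norm_num), hD, hi0, pow_zero, Dsub_one_zero]
      · refine ⟨some ⟨⟨k - 1, by omega⟩, ⟨i.val, by
          show i.val < 2 ^ ((k - 1) + 1)
          rwa [Nat.sub_add_cancel hk1]⟩⟩, ?_⟩
        apply Subtype.ext
        show Dsub (2 ^ e) (2 ^ ((k - 1) + 1)) _ = H
        rw [hD]
        have hkk : (k - 1) + 1 = k := Nat.sub_add_cancel hk1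
        congr 1
        · rw [hkk]
        · show (((i.val : ℕ) : ZMod (2 ^ e))) = i
          exact ZMod.natCast_zmod_val i

theorem count_aux {e : ℕ} (he : 1 ≤ e) :
    Nat.card {H : Subgroup (DihedralGroup (2 ^ e)) // IsNonpower H} = 2 ^ (e + 1) - 1 := by
  rw [← Nat.card_eq_of_bijective (Fmap he) (Fmap_bij he)]
  rw [Nat.card_eq_fintype_card, Fintype.card_option, Fintype.card_sigma]
  simp only [Fintype.card_fin]
  rw [sum_pow]
  have h2 : 2 ≤ (2 : ℕ) ^ (e + 1) := by
    calc (2:ℕ) = 2 ^ 1 := (pow_one 2).symm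
    _ ≤ 2 ^ (e + 1) := Nat.pow_le_pow_right (by norm_num) (by omega)
  omega

end NPSAux

theorem nps_dihedral_two_pow (n : ℕ) (hn : 3 ≤ n) :
    nps (DihedralGroup (2 ^ (n - 1))) = 2 ^ n - 1 := by
  have he : 1 ≤ n - 1 := by omega
  have h := NPSAux.count_aux he
  rw [nps, h, show n - 1 + 1 = n from by omega]
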